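/- arXiv:2205.03328 — 2 statements merged into one kernel-verified Lean document; each statement's English description precedes it below -/
import Mathlib

section
/- Define f(n0) = n0·F(n, n0). Let m and n be positive integers with m dividing n, and let n_1, ..., n_m be positive integers with n_1 + ... + n_m = n. Then Σ_{i=1}^{m} f(n_i) ≥ m·f(n/m). That is, among all ways of dismembering a ring of n nodes into m disjoint mini-rings by m jammers, the least harmful configuration is the equidistant placement creating m equal mini-rings of n/m nodes each. -/
open Finset

/-- Closed-form stationary version age of a single node in a mini-ring of `n0` gossiping
nodes cut out of a ring of `n` nodes (source rate `lamS`, per-node update rate `lam/n`,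
per-link rate `lam/2`). -/
noncomputable def ringNodeAge (lamS lam : ℝ) (n n0 : ℕ) : ℝ :=
  (lamS / lam) *
    ((∑ j ∈ Finset.Icc 1 (n0 - 1), ∏ k ∈ Finset.Icc 1 j, 1 / ((k : ℝ) / (n : ℝ) + 1))
      + ((n : ℝ) / (n0 : ℝ)) * ∏ k ∈ Finset.Icc 1 (n0 - 1), 1 / ((k : ℝ) / (n : ℝ) + 1))

/-- Sum of version ages over the `n0` nodes of such a mini-ring. -/
noncomputable def ringSumAge (lamS lam : ℝ) (n n0 : ℕ) : ℝ :=
  (n0 : ℝ) * ringNodeAge lamS lam n n0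

noncomputable def ringS (n t : ℕ) : ℝ :=
  ∑ j ∈ Finset.Icc 1 t, ∏ k ∈ Finset.Icc 1 j, 1 / ((k : ℝ) / (n : ℝ) + 1)

lemma ringP_pos (n : ℕ) (hn : 0 < n) (j : ℕ) :
    0 < ∏ k ∈ Finset.Icc 1 j, 1 / ((k : ℝ) / (n : ℝ) + 1) := by
  apply Finset.prod_pos
  intro k hk
  have : (0:ℝ) < n := by exact_mod_cast hn
  positivity

lemma ringS_nonneg (n : ℕ) (hn : 0 < n) (t : ℕ) : 0 ≤ ringS n t :=
  Finset.sum_nonneg fun j _ => (ringP_pos n hn j).le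

lemma ringS_mono (n : ℕ) (hn : 0 < n) {t u : ℕ} (h : t ≤ u) : ringS n t ≤ ringS n u := by
  apply Finset.sum_le_sum_of_subset_of_nonneg
  · exact Finset.Icc_subset_Icc_right h
  · intro j _ _; exact (ringP_pos n hn j).le

lemma ringSumAge_step (lamS lam : ℝ) (hlam : lam ≠ 0) (n : ℕ) (hn : 0 < n) (s : ℕ) :
    ringSumAge lamS lam n (s + 2)
      = ringSumAge lamS lam n (s + 1) + (lamS / lam) * ringS n (s + 1) := by
  unfold ringSumAge ringNodeAge ringS
  have h1 : (s + 2) - 1 = s + 1 := rfl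
  have h2 : (s + 1) - 1 = s := rfl
  rw [h1, h2]
  rw [Finset.sum_Icc_succ_top (by omega : 1 ≤ s + 1),
      Finset.prod_Icc_succ_top (by omega : 1 ≤ s + 1)]
  set A := ∑ j ∈ Finset.Icc 1 s, ∏ k ∈ Finset.Icc 1 j, 1 / ((k : ℝ) / (n : ℝ) + 1) with hA
  set B := ∏ k ∈ Finset.Icc 1 s, 1 / ((k : ℝ) / (n : ℝ) + 1) with hB
  have hnR : (0:ℝ) < n := by exact_mod_cast hn
  have hx : ((s + 1 : ℕ) : ℝ) / (n : ℝ) + 1 ≠ 0 := by positivity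
  have hs1 : ((s + 1 : ℕ) : ℝ) ≠ 0 := by positivity
  have hs2 : ((s + 2 : ℕ) : ℝ) ≠ 0 := by positivity
  push_cast at hx hs1 hs2 ⊢
  field_simp
  ring

lemma ringSumAge_tangent (lamS lam : ℝ) (hlamS : 0 < lamS) (hlam : 0 < lam)
    (n : ℕ) (hn : 0 < n) (q x : ℕ) (hq : 1 ≤ q) (hx : 1 ≤ x) :
    ringSumAge lamS lam n q + ((x : ℝ) - (q : ℝ)) * ((lamS / lam) * ringS n q)
      ≤ ringSumAge lamS lam n x := by
  have hc : 0 ≤ lamS / lam := le_of_lt (div_pos hlamS hlam)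
  rcases le_total q x with hqx | hxq
  · -- x = q + d
    obtain ⟨d, rfl⟩ := Nat.exists_eq_add_of_le hqx
    have key : ∀ d : ℕ, ringSumAge lamS lam n q + (d : ℝ) * ((lamS / lam) * ringS n q)
        ≤ ringSumAge lamS lam n (q + d) := by
      intro d
      induction d with
      | zero => simp
      | succ d ih =>
        obtain ⟨s, rfl⟩ := Nat.exists_eq_add_of_le hq
        have hstep := ringSumAge_step lamS lam (ne_of_gt hlam) n hn (s + d)
        have heq : 1 + s + (d + 1) = (s + d) + 2 := by ring
        have heq2 : 1 + s + d = (s + d) + 1 := by ring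
        rw [heq, hstep, ← heq2]
        have hmono : ringS n (1 + s) ≤ ringS n (1 + s + d) := ringS_mono n hn (by omega)
        have : ringS n (1 + s) ≤ ringS n ((s + d) + 1) := by
          have : (s + d) + 1 = 1 + s + d := by ring
          rw [this]; exact hmono
        push_cast
        nlinarith [ih, mul_le_mul_of_nonneg_left this hc]
    have := key d
    have hcast : ((q + d : ℕ) : ℝ) - (q : ℝ) = (d : ℝ) := by push_cast; ring
    rw [hcast]
    exact this
  · -- q = x + d
    obtain ⟨d, rfl⟩ := Nat.exists_eq_add_of_le hxq
    have key : ∀ e : ℕ, x + e ≤ x + d → ringSumAge lamS lam n (x + e)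
        ≤ ringSumAge lamS lam n x + (e : ℝ) * ((lamS / lam) * ringS n (x + d)) := by
      intro e
      induction e with
      | zero => intro _; simp
      | succ e ih =>
        intro hle
        obtain ⟨s, rfl⟩ := Nat.exists_eq_add_of_le hx
        have hstep := ringSumAge_step lamS lam (ne_of_gt hlam) n hn (s + e)
        have heq : 1 + s + (e + 1) = (s + e) + 2 := by ring
        have heq2 : 1 + s + e = (s + e) + 1 := by ring
        rw [heq, hstep, ← heq2]
        have ih2 := ih (by omega)
        have hmono : ringS n (1 + s + e) ≤ ringS n (1 + s + d) := ringS_mono n hn (by omega)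
        push_cast
        nlinarith [mul_le_mul_of_nonneg_left hmono hc]
    have := key d le_rfl
    have hcast : (x : ℝ) - ((x + d : ℕ) : ℝ) = -(d : ℝ) := by push_cast; ring
    rw [hcast]
    linarith

/-- Among all ways of dismembering a ring of `n` nodes into `m` disjoint mini-rings of sizes
`n_1 + ⋯ + n_m = n` (with `m ∣ n`), the least harmful configuration is the equidistant
placement creating `m` equal mini-rings of `n/m` nodes each: `Σ_i f(n_i) ≥ m·f(n/m)`. -/
theorem least_harmful_jammer_configuration
    (lamS lam : ℝ) (hlamS : 0 < lamS) (hlam : 0 < lam)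
    (m n : ℕ) (hm : 0 < m) (hn : 0 < n) (hdvd : m ∣ n)
    (a : Fin m → ℕ) (ha : ∀ i, 0 < a i) (hsum : ∑ i, a i = n) :
    (m : ℝ) * ringSumAge lamS lam n (n / m) ≤ ∑ i, ringSumAge lamS lam n (a i) := by
  set q := n / m with hq
  have hmq : m * q = n := Nat.mul_div_cancel' hdvd
  have hq1 : 1 ≤ q := by
    rcases Nat.eq_zero_or_pos q with h | h
    · rw [h, Nat.mul_zero] at hmq; omega
    · exact h
  have hbound : ∀ i, ringSumAge lamS lam n q + ((a i : ℝ) - (q : ℝ)) * ((lamS / lam) * ringS n q)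
      ≤ ringSumAge lamS lam n (a i) :=
    fun i => ringSumAge_tangent lamS lam hlamS hlam n hn q (a i) hq1 (ha i)
  calc (m : ℝ) * ringSumAge lamS lam n q
      = ∑ i : Fin m, (ringSumAge lamS lam n q
          + ((a i : ℝ) - (q : ℝ)) * ((lamS / lam) * ringS n q)) := by
        rw [Finset.sum_add_distrib, Finset.sum_const, ← Finset.sum_mul]
        have : ∑ i : Fin m, ((a i : ℝ) - (q : ℝ)) = 0 := by
          rw [Finset.sum_sub_distrib, Finset.sum_const]
          have : ∑ i : Fin m, ((a i : ℝ)) = (n : ℝ) := by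
            rw [← Nat.cast_sum]; exact_mod_cast congrArg (Nat.cast (R := ℝ)) hsum
          rw [this]
          simp only [Finset.card_univ, Fintype.card_fin, nsmul_eq_mul]
          have : ((m : ℝ) * (q : ℝ)) = (n : ℝ) := by exact_mod_cast congrArg (Nat.cast (R := ℝ)) hmq
          linarith
        rw [this, zero_mul, add_zero]
        simp [mul_comm]
    _ ≤ ∑ i, ringSumAge lamS lam n (a i) := Finset.sum_le_sum fun i _ => hbound i
end

section
/- Fix reals c > 0, λs > 0, λ > 0 and α ∈ (0, 1/2). Then there exist a constant C > 0 and an integer N such that for every integer n ≥ N, setting ñ = ⌈c·n^α⌉ and D(n) = ((ñ−1)·F(n, 1) + (n−ñ+1)·F(n, n−ñ+1))/n (the average version age in the most harmful jammer configuration, with ñ−1 isolated nodes and one mini-ring of n−ñ+1 nodes), one has D(n) ≤ C·√n. That is, with Θ(n^α) jammers and α < 1/2, the average version age is O(√n), the same scaling as a ring with no jammers. -/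
open Finset

lemma aux_factor_pos (n k : ℕ) : 0 < 1 / ((k : ℝ) / (n : ℝ) + 1) := by
  have h1 : (0:ℝ) ≤ (k:ℝ) / (n:ℝ) := by positivity
  positivity

lemma aux_factor_le_one (n k : ℕ) : 1 / ((k : ℝ) / (n : ℝ) + 1) ≤ 1 := by
  have h1 : (0:ℝ) ≤ (k:ℝ) / (n:ℝ) := by positivity
  rw [div_le_one (by linarith)]
  linarith

lemma aux_prod_le_one (n j : ℕ) : ∏ k ∈ Finset.Icc 1 j, 1 / ((k : ℝ) / (n : ℝ) + 1) ≤ 1 :=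
  Finset.prod_le_one (fun k _ => (aux_factor_pos n k).le) (fun k _ => aux_factor_le_one n k)

lemma aux_prod_nonneg (n j : ℕ) : 0 ≤ ∏ k ∈ Finset.Icc 1 j, 1 / ((k : ℝ) / (n : ℝ) + 1) :=
  Finset.prod_nonneg (fun k _ => (aux_factor_pos n k).le)

lemma sum_prod_bound (n M : ℕ) (hn : 1 ≤ n) :
    ∑ j ∈ Finset.Icc 1 M, ∏ k ∈ Finset.Icc 1 j, 1 / ((k : ℝ) / (n : ℝ) + 1)
      ≤ 2 * Real.sqrt n + 1 := by
  have hn0 : (0:ℝ) < n := by exact_mod_cast hn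
  have hs : 0 < Real.sqrt n := Real.sqrt_pos.mpr hn0
  set m := ⌈Real.sqrt n⌉₊ with hmdef
  have hm1 : 1 ≤ m := Nat.ceil_pos.mpr hs
  have hsm : Real.sqrt n ≤ (m:ℝ) := Nat.le_ceil _
  have hm_le : (m:ℝ) ≤ Real.sqrt n + 1 := (Nat.ceil_lt_add_one hs.le).le
  have hmpos : (0:ℝ) < m := lt_of_lt_of_le hs hsm
  set r := 1 / ((m:ℝ)/(n:ℝ) + 1) with hrdef
  have hmn : (0:ℝ) < (m:ℝ)/(n:ℝ) := div_pos hmpos hn0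
  have hr0 : 0 < r := aux_factor_pos n m
  have hr1 : r < 1 := by
    rw [hrdef, div_lt_one (by linarith)]
    linarith
  have hnm_le : (n:ℝ) / m ≤ Real.sqrt n := by
    rw [div_le_iff₀ hmpos]
    calc (n:ℝ) = Real.sqrt n * Real.sqrt n := (Real.mul_self_sqrt hn0.le).symm
    _ ≤ Real.sqrt n * m := by nlinarith
  by_cases hMm : M ≤ m
  · calc ∑ j ∈ Finset.Icc 1 M, ∏ k ∈ Finset.Icc 1 j, 1 / ((k : ℝ) / (n : ℝ) + 1)
        ≤ ∑ j ∈ Finset.Icc 1 M, 1 := Finset.sum_le_sum (fun j _ => aux_prod_le_one n j)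
    _ = (M:ℝ) := by simp
    _ ≤ (m:ℝ) := by exact_mod_cast hMm
    _ ≤ 2 * Real.sqrt n + 1 := by linarith
  · push_neg at hMm
    have hIcc : ∀ x : ℕ, Finset.Icc 1 x = Finset.Ioc 0 x := fun x => Finset.Icc_add_one_left_eq_Ioc 0 x
    rw [hIcc M, ← Finset.sum_Ioc_consecutive _ (Nat.zero_le m) hMm.le]
    have h1 : ∑ j ∈ Finset.Ioc 0 m, ∏ k ∈ Finset.Icc 1 j, 1 / ((k : ℝ) / (n : ℝ) + 1)
        ≤ (m:ℝ) := by
      calc ∑ j ∈ Finset.Ioc 0 m, ∏ k ∈ Finset.Icc 1 j, 1 / ((k : ℝ) / (n : ℝ) + 1)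
          ≤ ∑ j ∈ Finset.Ioc 0 m, 1 := Finset.sum_le_sum (fun j _ => aux_prod_le_one n j)
      _ = (m:ℝ) := by simp
    have hterm : ∀ j ∈ Finset.Ioc m M, ∏ k ∈ Finset.Icc 1 j, 1 / ((k : ℝ) / (n : ℝ) + 1)
        ≤ r ^ (j - m) := by
      intro j hj
      obtain ⟨hmj, hjM⟩ := Finset.mem_Ioc.mp hj
      rw [hIcc j, ← Finset.prod_Ioc_consecutive _ (Nat.zero_le m) hmj.le]
      have h2 : ∏ k ∈ Finset.Ioc m j, 1 / ((k : ℝ) / (n : ℝ) + 1) ≤ r ^ (j - m) := by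
        have : ∏ k ∈ Finset.Ioc m j, 1 / ((k : ℝ) / (n : ℝ) + 1)
            ≤ ∏ _k ∈ Finset.Ioc m j, r := by
          apply Finset.prod_le_prod (fun k _ => (aux_factor_pos n k).le)
          intro k hk
          have hmk : m ≤ k := (Finset.mem_Ioc.mp hk).1.le
          rw [hrdef]
          have hmk' : (m:ℝ) ≤ (k:ℝ) := by exact_mod_cast hmk
          apply one_div_le_one_div_of_le (by positivity)
          gcongr
        rwa [Finset.prod_const, Nat.card_Ioc] at this
      calc (∏ k ∈ Finset.Ioc 0 m, 1 / ((k : ℝ) / (n : ℝ) + 1)) *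
            ∏ k ∈ Finset.Ioc m j, 1 / ((k : ℝ) / (n : ℝ) + 1)
          ≤ 1 * (r ^ (j - m)) := by
            apply mul_le_mul _ h2 (Finset.prod_nonneg (fun k _ => (aux_factor_pos n k).le))
              zero_le_one
            rw [← hIcc m]; exact aux_prod_le_one n m
      _ = r ^ (j - m) := one_mul _
    have h2 : ∑ j ∈ Finset.Ioc m M, ∏ k ∈ Finset.Icc 1 j, 1 / ((k : ℝ) / (n : ℝ) + 1)
        ≤ (n:ℝ) / m := by
      calc ∑ j ∈ Finset.Ioc m M, ∏ k ∈ Finset.Icc 1 j, 1 / ((k : ℝ) / (n : ℝ) + 1)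
          ≤ ∑ j ∈ Finset.Ioc m M, r ^ (j - m) := Finset.sum_le_sum hterm
      _ = ∑ i ∈ Finset.range (M + 1 - (m + 1)), r ^ (m + 1 + i - m) := by
            rw [← Finset.Ico_add_one_add_one_eq_Ioc, Finset.sum_Ico_eq_sum_range]
      _ = ∑ i ∈ Finset.range (M + 1 - (m + 1)), r * r ^ i := by
            apply Finset.sum_congr rfl
            intro i _
            have : m + 1 + i - m = i + 1 := by omega
            rw [this, pow_succ, mul_comm]
      _ = r * ∑ i ∈ Finset.range (M + 1 - (m + 1)), r ^ i := by rw [Finset.mul_sum]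
      _ ≤ r * (1 - r)⁻¹ := by
            apply mul_le_mul_of_nonneg_left _ hr0.le
            have hsummable := (hasSum_geometric_of_lt_one hr0.le hr1)
            calc ∑ i ∈ Finset.range (M + 1 - (m + 1)), r ^ i
                ≤ ∑' i : ℕ, r ^ i := Summable.sum_le_tsum _ (fun i _ => pow_nonneg hr0.le i)
                  hsummable.summable
            _ = (1 - r)⁻¹ := hsummable.tsum_eq
      _ = (n:ℝ) / m := by
            rw [hrdef]
            rw [show (1:ℝ) - 1 / ((m:ℝ)/(n:ℝ) + 1) = ((m:ℝ)/(n:ℝ)) / ((m:ℝ)/(n:ℝ) + 1) by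
              field_simp; ring]
            field_simp
      _ ≤ (n:ℝ)/m := le_refl _
    have := h2.trans hnm_le
    linarith

lemma ringNodeAge_one (lamS lam : ℝ) (n : ℕ) :
    ringNodeAge lamS lam n 1 = lamS / lam * n := by
  simp [ringNodeAge]

set_option maxHeartbeats 1000000 in
/-- With `ñ = ⌈c·n^α⌉` jammers in the most harmful configuration (`ñ - 1` isolated nodes and
one mini-ring of `n - ñ + 1` nodes) and `α ∈ (0, 1/2)`, the average version age
`D(n) = ((ñ-1)·F(n,1) + (n-ñ+1)·F(n, n-ñ+1))/n` is `O(√n)`: `D(n) ≤ C·√n` for large `n`,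
the same scaling as a ring with no jammers. -/
theorem most_harmful_jammers_age_upper_bound_small_alpha
    (c lamS lam α : ℝ) (hc : 0 < c) (hlamS : 0 < lamS) (hlam : 0 < lam)
    (hα1 : 0 < α) (hα2 : α < 1 / 2) :
    ∃ C : ℝ, 0 < C ∧ ∃ N : ℕ, ∀ n : ℕ, N ≤ n →
      ((⌈c * (n : ℝ) ^ α⌉₊ - 1 : ℝ) * ringNodeAge lamS lam n 1
          + ((n - ⌈c * (n : ℝ) ^ α⌉₊ + 1 : ℕ) : ℝ)
            * ringNodeAge lamS lam n (n - ⌈c * (n : ℝ) ^ α⌉₊ + 1)) / (n : ℝ)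
        ≤ C * Real.sqrt n := by
  refine ⟨lamS / lam * (c + 5), by positivity, max 4 ⌈(4*c)^2⌉₊, ?_⟩
  intro n hn
  have hn4 : 4 ≤ n := le_trans (le_max_left _ _) hn
  have hn1 : 1 ≤ n := by omega
  have hnR : (4:ℝ) ≤ (n:ℝ) := by exact_mod_cast hn4
  have hn0R : (0:ℝ) < n := by linarith
  have hs0 : 0 < Real.sqrt n := Real.sqrt_pos.mpr hn0R
  have hss : Real.sqrt n * Real.sqrt n = n := Real.mul_self_sqrt hn0R.le
  have hs1 : 1 ≤ Real.sqrt n := by nlinarith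
  have hcs : 4 * c ≤ Real.sqrt n := by
    have h1 : ((⌈(4*c)^2⌉₊ : ℕ):ℝ) ≤ (n:ℝ) := by
      exact_mod_cast le_trans (le_max_right 4 _) hn
    have h2 : (4*c)^2 ≤ (n:ℝ) := le_trans (Nat.le_ceil _) h1
    nlinarith
  set t := ⌈c * (n:ℝ) ^ α⌉₊ with htdef
  have hpow_pos : 0 < (n:ℝ) ^ α := Real.rpow_pos_of_pos hn0R α
  have ht1 : 1 ≤ t := Nat.ceil_pos.mpr (by positivity)
  have hpow_le : (n:ℝ) ^ α ≤ Real.sqrt n := by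
    rw [Real.sqrt_eq_rpow]
    exact Real.rpow_le_rpow_of_exponent_le (by exact_mod_cast hn1) hα2.le
  have htle : (t:ℝ) ≤ c * Real.sqrt n + 1 := by
    have h4 := (Nat.ceil_lt_add_one (by positivity : (0:ℝ) ≤ c * (n:ℝ)^α)).le
    have h3 : c * (n:ℝ)^α ≤ c * Real.sqrt n := by nlinarith
    rw [htdef]; linarith
  have ht_half : (t:ℝ) ≤ (n:ℝ)/2 := by nlinarith
  have htn : t ≤ n := by
    have : (t:ℝ) ≤ (n:ℝ) := by linarith
    exact_mod_cast this
  set n0 := n - t + 1 with hn0def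
  have hcast : (n0:ℝ) = (n:ℝ) - (t:ℝ) + 1 := by
    rw [hn0def, Nat.cast_add, Nat.cast_sub htn, Nat.cast_one]
  have ht1R : (1:ℝ) ≤ (t:ℝ) := by exact_mod_cast ht1
  have hn0_le : (n0:ℝ) ≤ (n:ℝ) := by rw [hcast]; linarith
  have hn0_ge : (n:ℝ)/2 ≤ (n0:ℝ) := by rw [hcast]; linarith
  have hn0_pos : (0:ℝ) < (n0:ℝ) := by linarith
  have hF2 : ringNodeAge lamS lam n n0 ≤ lamS/lam * (2 * Real.sqrt n + 3) := by
    rw [ringNodeAge]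
    have hA := sum_prod_bound n (n0-1) hn1
    have hB : (n:ℝ)/(n0:ℝ) * ∏ k ∈ Finset.Icc 1 (n0-1), 1/((k:ℝ)/(n:ℝ)+1) ≤ 2 := by
      have hdiv : (n:ℝ)/(n0:ℝ) ≤ 2 := by
        rw [div_le_iff₀ hn0_pos]; linarith
      calc (n:ℝ)/(n0:ℝ) * ∏ k ∈ Finset.Icc 1 (n0-1), 1/((k:ℝ)/(n:ℝ)+1)
          ≤ (n:ℝ)/(n0:ℝ) * 1 :=
            mul_le_mul_of_nonneg_left (aux_prod_le_one n _) (by positivity)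
      _ = (n:ℝ)/(n0:ℝ) := mul_one _
      _ ≤ 2 := hdiv
    have hgd : 0 ≤ lamS/lam := by positivity
    apply mul_le_mul_of_nonneg_left _ hgd
    linarith
  rw [ringNodeAge_one]
  have hF2nn : 0 ≤ lamS/lam * (2 * Real.sqrt n + 3) := by positivity
  have hnum : ((t:ℝ)-1) * (lamS/lam * n) + (n0:ℝ) * ringNodeAge lamS lam n n0
      ≤ c * Real.sqrt n * (lamS/lam * n) + (n:ℝ) * (lamS/lam * (2*Real.sqrt n + 3)) := by
    have e1 : ((t:ℝ)-1) * (lamS/lam*(n:ℝ)) ≤ c*Real.sqrt n * (lamS/lam*(n:ℝ)) :=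
      mul_le_mul_of_nonneg_right (by linarith) (by positivity)
    have e2 : (n0:ℝ) * ringNodeAge lamS lam n n0
        ≤ (n:ℝ) * (lamS/lam * (2*Real.sqrt n+3)) := by
      calc (n0:ℝ) * ringNodeAge lamS lam n n0
          ≤ (n0:ℝ) * (lamS/lam*(2*Real.sqrt n+3)) :=
            mul_le_mul_of_nonneg_left hF2 hn0_pos.le
      _ ≤ (n:ℝ) * (lamS/lam*(2*Real.sqrt n+3)) :=
            mul_le_mul_of_nonneg_right hn0_le hF2nn
    linarith
  calc (((t:ℝ)-1) * (lamS/lam * n) + (n0:ℝ) * ringNodeAge lamS lam n n0) / (n:ℝ)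
      ≤ (c * Real.sqrt n * (lamS/lam * n) + (n:ℝ) * (lamS/lam * (2*Real.sqrt n + 3))) / (n:ℝ) :=
        div_le_div_of_nonneg_right hnum hn0R.le
  _ = lamS/lam * (c * Real.sqrt n + 2 * Real.sqrt n + 3) := by
        field_simp; ring
  _ ≤ lamS/lam * ((c+5) * Real.sqrt n) := by
        apply mul_le_mul_of_nonneg_left _ (by positivity)
        nlinarith
  _ = lamS / lam * (c+5) * Real.sqrt n := by ring
end
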